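/- Let n ≥ 2 and 0 ≤ s < C(n,2) be integers, and let q, r be the unique integers with 1 ≤ r < q ≤ n and C(n,2) − s − 1 = C(q,2) − r. Then n − q ≥ ⌊s/n⌋. -/
import Mathlib

lemma two_mul_choose_two' (m : ℕ) : 2 * m.choose 2 = m * (m - 1) := by
  induction m with
  | zero => rfl
  | succ k ih =>
    rw [Nat.choose_succ_succ, Nat.choose_one_right]
    cases k with
    | zero => rfl
    | succ j => simp only [Nat.succ_sub_one] at *; ring_nf; ring_nf at ih; omega

/-- With `q`, `r` the unique integers satisfying `1 ≤ r < q ≤ n` and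
`C(n,2) − s − 1 = C(q,2) − r`, we have `n − q ≥ ⌊s/n⌋`. -/
theorem stmt_17 (n s q r : ℕ) (hn : 2 ≤ n) (hs : s < n.choose 2)
    (hr : 1 ≤ r) (hrq : r < q) (hq : q ≤ n)
    (heq : (n.choose 2 : ℤ) - s - 1 = (q.choose 2 : ℤ) - r) :
    s / n ≤ n - q := by
  have hc1 : 2 * (n.choose 2 : ℤ) = (n : ℤ) * ((n : ℤ) - 1) := by
    have := two_mul_choose_two' n
    zify [show 1 ≤ n by omega] at this
    linarith
  have hc2 : 2 * (q.choose 2 : ℤ) = (q : ℤ) * ((q : ℤ) - 1) := by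
    have := two_mul_choose_two' q
    zify [show 1 ≤ q by omega] at this
    linarith
  have hrq' : (r : ℤ) < (q : ℤ) := by exact_mod_cast hrq
  have hq' : (q : ℤ) ≤ (n : ℤ) := by exact_mod_cast hq
  have key : (s : ℤ) < (n : ℤ) * ((n : ℤ) - q + 1) := by nlinarith [heq]
  have keyn : s < n * (n - q + 1) := by
    have : ((n * (n - q + 1) : ℕ) : ℤ) = (n : ℤ) * ((n : ℤ) - q + 1) := by
      push_cast [hq]; ring
    omega
  have := (Nat.div_lt_iff_lt_mul (show 0 < n by omega)).2
    (show s < (n - q + 1) * n by rw [Nat.mul_comm] at keyn; exact keyn)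
  omega
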